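/- Let μ be a continuous capacity on a measurable space (Ω,𝓕) and let 𝓕₀ be a sub-σ-algebra of 𝓕 such that μ(A) ∈ {0,1} for every A ∈ 𝓕₀. Then for every 𝓕₀-measurable random variable ξ : Ω → ℝ one has μ({ω : ξ(ω) ≥ ∫_Ω ξ dμ}) = 1 and μ({ω : ξ(ω) ≤ ∫_Ω ξ dμ̄}) = 1, where the integrals are Choquet integrals with respect to μ and to the conjugate capacity μ̄ respectively. -/

import Mathlib

open MeasureTheory Filter Topology Set

def IsFinAddProb {Ω : Type*} [MeasurableSpace Ω] (P : Set Ω → ℝ) : Prop :=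
  P ∅ = 0 ∧ P Set.univ = 1 ∧
    (∀ A : Set Ω, MeasurableSet A → 0 ≤ P A ∧ P A ≤ 1) ∧
    (∀ A B : Set Ω, MeasurableSet A → MeasurableSet B → Disjoint A B →
      P (A ∪ B) = P A + P B)

def IsCapacity {Ω : Type*} [MeasurableSpace Ω] (μ : Set Ω → ℝ) : Prop :=
  μ ∅ = 0 ∧ μ Set.univ = 1 ∧
    ∀ A B : Set Ω, MeasurableSet A → MeasurableSet B → A ⊆ B → μ A ≤ μ B

def ContBelow {Ω : Type*} [MeasurableSpace Ω] (μ : Set Ω → ℝ) : Prop :=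
  ∀ A : ℕ → Set Ω, (∀ n, MeasurableSet (A n)) → Monotone A →
    Filter.Tendsto (fun n => μ (A n)) Filter.atTop (nhds (μ (⋃ n, A n)))

def ContAbove {Ω : Type*} [MeasurableSpace Ω] (μ : Set Ω → ℝ) : Prop :=
  ∀ A : ℕ → Set Ω, (∀ n, MeasurableSet (A n)) → Antitone A →
    Filter.Tendsto (fun n => μ (A n)) Filter.atTop (nhds (μ (⋂ n, A n)))

def ContAtEmpty {Ω : Type*} [MeasurableSpace Ω] (μ : Set Ω → ℝ) : Prop :=
  ∀ A : ℕ → Set Ω, (∀ n, MeasurableSet (A n)) → Antitone A → (⋂ n, A n) = ∅ →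
    Filter.Tendsto (fun n => μ (A n)) Filter.atTop (nhds 0)

def ContAtUniv {Ω : Type*} [MeasurableSpace Ω] (μ : Set Ω → ℝ) : Prop :=
  ∀ A : ℕ → Set Ω, (∀ n, MeasurableSet (A n)) → Monotone A → (⋃ n, A n) = Set.univ →
    Filter.Tendsto (fun n => μ (A n)) Filter.atTop (nhds 1)

def conjCap {Ω : Type*} (μ : Set Ω → ℝ) (A : Set Ω) : ℝ := 1 - μ Aᶜ

noncomputable def choquet {Ω : Type*} (μ : Set Ω → ℝ) (ξ : Ω → ℝ) : ℝ :=
  (∫ t in Set.Ioi (0:ℝ), μ {ω | ξ ω ≥ t}) +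
    (∫ t in Set.Iio (0:ℝ), (μ {ω | ξ ω ≥ t} - 1))

noncomputable def choquetE {Ω : Type*} (μ : Set Ω → ℝ) (ξ : Ω → EReal) : ℝ :=
  (∫ t in Set.Ioi (0:ℝ), μ {ω | (t : EReal) ≤ ξ ω}) +
    (∫ t in Set.Iio (0:ℝ), (μ {ω | (t : EReal) ≤ ξ ω} - 1))

def UpperProbOf {Ω : Type*} [MeasurableSpace Ω] (𝒮 : Set (Set Ω → ℝ)) (V : Set Ω → ℝ) : Prop :=
  ∀ A : Set Ω, MeasurableSet A → V A = sSup ((fun P => P A) '' 𝒮)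

def LowerProbOf {Ω : Type*} [MeasurableSpace Ω] (𝒮 : Set (Set Ω → ℝ)) (v : Set Ω → ℝ) : Prop :=
  ∀ A : Set Ω, MeasurableSet A → v A = sInf ((fun P => P A) '' 𝒮)

def ErgodicCap {Ω : Type*} [MeasurableSpace Ω] (μ : Set Ω → ℝ) (θ : Ω → Ω) : Prop :=
  ∀ B : Set Ω, MeasurableSet B → θ ⁻¹' B = B →
    (μ B = 0 ∨ μ B = 1) ∧ (μ B = 0 ∨ μ Bᶜ = 0)

def PreservesCap {Ω : Type*} [MeasurableSpace Ω] (μ : Set Ω → ℝ) (θ : Ω → Ω) : Prop :=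
  ∀ A : Set Ω, MeasurableSet A → μ (θ ⁻¹' A) = μ A

def IndepSigmaWrt {Ω : Type*} (μ : Set Ω → ℝ) (m₁ m₂ : MeasurableSpace Ω) : Prop :=
  ∀ A B : Set Ω, MeasurableSet[m₁] A → MeasurableSet[m₂] B → μ (A ∩ B) = μ A * μ B

lemma choquet_of_cutoff (c : ℝ) (F : ℝ → ℝ) (hF : ∀ t, F t = if t ≤ c then 1 else 0) :
    (∫ t in Ioi (0:ℝ), F t) + (∫ t in Iio (0:ℝ), (F t - 1)) = c := by
  have h1 : (∫ t in Ioi (0:ℝ), F t) = max c 0 := by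
    rw [show (∫ t in Ioi (0:ℝ), F t) = ∫ t in Ioi (0:ℝ), (Ioc (0:ℝ) c).indicator (fun _ => (1:ℝ)) t from
      setIntegral_congr_fun measurableSet_Ioi (fun t ht => by
        rw [hF]; by_cases h : t ≤ c <;> simp [Set.indicator, h, ht.out])]
    rw [setIntegral_indicator measurableSet_Ioc, Set.inter_eq_right.mpr Ioc_subset_Ioi_self,
      setIntegral_const, measureReal_def, Real.volume_Ioc, smul_eq_mul, mul_one, ENNReal.toReal_ofReal', sub_zero]
  have h2 : (∫ t in Iio (0:ℝ), (F t - 1)) = -(max (-c) 0) := by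
    rw [show (∫ t in Iio (0:ℝ), (F t - 1)) = ∫ t in Iio (0:ℝ), -((Ioo c 0).indicator (fun _ => (1:ℝ)) t) from
      setIntegral_congr_fun measurableSet_Iio (fun t ht => by
        rw [hF]
        by_cases h : t ≤ c
        · simp [Set.indicator, h, not_lt.mpr h]
        · simp [Set.indicator, h, Set.mem_Ioo, lt_of_not_ge h, ht.out])]
    rw [integral_neg, setIntegral_indicator measurableSet_Ioo, Set.inter_eq_right.mpr Ioo_subset_Iio_self,
      setIntegral_const, measureReal_def, Real.volume_Ioo, smul_eq_mul, mul_one, ENNReal.toReal_ofReal', zero_sub]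
  rw [h1, h2]
  rcases le_total 0 c with h | h
  · rw [max_eq_left h, max_eq_right (by linarith)]; ring
  · rw [max_eq_right h, max_eq_left (by linarith)]; ring

lemma cutoff_exists (f : ℝ → ℝ) (h2 : ∀ t, f t = 0 ∨ f t = 1)
    (hmono : ∀ ⦃s t : ℝ⦄, s ≤ t → f t ≤ f s)
    (h0 : ∃ t, f t = 0) (h1 : ∃ t, f t = 1)
    (hlc : ∀ t, (∀ s, s < t → f s = 1) → f t = 1) :
    ∃ c : ℝ, ∀ t, f t = if t ≤ c then 1 else 0 := by
  obtain ⟨t₀, ht₀⟩ := h0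
  obtain ⟨t₁, ht₁⟩ := h1
  have hne : ({t | f t = 1} : Set ℝ).Nonempty := ⟨t₁, ht₁⟩
  have hbdd : BddAbove {t | f t = 1} := by
    refine ⟨t₀, fun t ht => ?_⟩
    by_contra h
    push_neg at h
    have := hmono h.le
    rw [ht₀, Set.mem_setOf_eq.mp ht] at this
    linarith
  set c := sSup {t | f t = 1} with hc
  have hall : ∀ s, s < c → f s = 1 := by
    intro s hs
    obtain ⟨u, huS, hsu⟩ := exists_lt_of_lt_csSup hne hs
    have hle := hmono hsu.le
    rw [Set.mem_setOf_eq.mp huS] at hle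
    rcases h2 s with h | h
    · linarith
    · exact h
  have hfc : f c = 1 := hlc c hall
  refine ⟨c, fun t => ?_⟩
  rcases lt_trichotomy t c with h | h | h
  · rw [if_pos h.le]; exact hall t h
  · rw [h, if_pos le_rfl]; exact hfc
  · rw [if_neg (not_le.mpr h)]
    rcases h2 t with h' | h'
    · exact h'
    · exact absurd (le_csSup hbdd h') (not_le.mpr h)

theorem stmt7 {Ω : Type*} [mΩ : MeasurableSpace Ω]
    (μ : Set Ω → ℝ) (hcap : IsCapacity μ) (hb : ContBelow μ) (ha : ContAbove μ)
    (m₀ : MeasurableSpace Ω) (hm₀ : m₀ ≤ mΩ)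
    (h01 : ∀ A : Set Ω, MeasurableSet[m₀] A → μ A = 0 ∨ μ A = 1)
    (ξ : Ω → ℝ) (hξ : Measurable[m₀] ξ) :
    μ {ω | ξ ω ≥ choquet μ ξ} = 1 ∧ μ {ω | ξ ω ≤ choquet (conjCap μ) ξ} = 1 := by
  obtain ⟨hemp, huniv, hmonoμ⟩ := hcap
  set E : ℝ → Set Ω := fun t => {ω | ξ ω ≥ t} with hE
  have meas0 : ∀ t, MeasurableSet[m₀] (E t) := fun t => hξ measurableSet_Ici
  have measM : ∀ t, MeasurableSet[mΩ] (E t) := fun t => hm₀ _ (meas0 t)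
  have hEanti : ∀ ⦃s t : ℝ⦄, s ≤ t → E t ⊆ E s := fun s t hst ω hω => le_trans hst hω
  -- antitone family t ↦ t - 1/(n+1)
  have hfrac : ∀ {n m : ℕ}, n ≤ m → 1/((m:ℝ)+1) ≤ 1/((n:ℝ)+1) := by
    intro n m hnm
    have h : (n:ℝ) ≤ m := by exact_mod_cast hnm
    apply one_div_le_one_div_of_le (by positivity)
    linarith
  have hIE : ∀ t : ℝ, (⋂ n : ℕ, E (t - 1/((n:ℝ)+1))) = E t := by
    intro t
    ext ω
    simp only [Set.mem_iInter, hE, Set.mem_setOf_eq, ge_iff_le]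
    constructor
    · intro h
      by_contra hlt
      push_neg at hlt
      obtain ⟨n, hn⟩ := exists_nat_one_div_lt (show (0:ℝ) < t - ξ ω by linarith)
      have := h n
      linarith
    · intro h n; linarith [one_div_pos.mpr (show (0:ℝ) < (n:ℝ)+1 by positivity)]
  -- PART 1
  set f : ℝ → ℝ := fun t => μ (E t) with hf
  have h2 : ∀ t, f t = 0 ∨ f t = 1 := fun t => h01 _ (meas0 t)
  have hmonof : ∀ ⦃s t : ℝ⦄, s ≤ t → f t ≤ f s := fun s t hst =>
    hmonoμ _ _ (measM t) (measM s) (hEanti hst)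
  have h0 : ∃ t, f t = 0 := by
    have hI : (⋂ n : ℕ, E (n : ℝ)) = ∅ := by
      ext ω
      simp only [Set.mem_iInter, hE, Set.mem_setOf_eq, Set.mem_empty_iff_false, iff_false]
      push_neg
      obtain ⟨n, hn⟩ := exists_nat_gt (ξ ω)
      exact ⟨n, hn⟩
    have htd : Tendsto (fun n : ℕ => f n) atTop (nhds 0) := by
      have := ha (fun n : ℕ => E n) (fun n => measM _) (fun n m hnm => hEanti (by exact_mod_cast hnm))
      rwa [hI, hemp] at this
    obtain ⟨n, hn⟩ := (htd.eventually_lt_const (show (0:ℝ) < 1 by norm_num)).exists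
    rcases h2 n with h | h
    · exact ⟨n, h⟩
    · rw [h] at hn; linarith
  have h1 : ∃ t, f t = 1 := by
    have hU : (⋃ n : ℕ, E (-(n : ℝ))) = Set.univ := by
      ext ω
      simp only [Set.mem_iUnion, hE, Set.mem_setOf_eq, Set.mem_univ, iff_true, ge_iff_le]
      obtain ⟨n, hn⟩ := exists_nat_gt (-(ξ ω))
      exact ⟨n, by linarith⟩
    have htd : Tendsto (fun n : ℕ => f (-(n:ℝ))) atTop (nhds 1) := by
      have := hb (fun n : ℕ => E (-(n:ℝ))) (fun n => measM _)
        (fun n m hnm => hEanti (neg_le_neg (by exact_mod_cast hnm)))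
      rwa [hU, huniv] at this
    obtain ⟨n, hn⟩ := (htd.eventually_const_lt (show (0:ℝ) < 1 by norm_num)).exists
    rcases h2 (-(n:ℝ)) with h | h
    · rw [h] at hn; linarith
    · exact ⟨_, h⟩
  have hlcf : ∀ t, (∀ s, s < t → f s = 1) → f t = 1 := by
    intro t hyp
    have hanti : Antitone (fun n : ℕ => E (t - 1/((n:ℝ)+1))) := fun n m hnm =>
      hEanti (by linarith [hfrac hnm])
    have htd := ha _ (fun n => measM _) hanti
    rw [hIE t] at htd
    have hconst : ∀ n : ℕ, f (t - 1/((n:ℝ)+1)) = 1 := fun n =>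
      hyp _ (by linarith [one_div_pos.mpr (show (0:ℝ) < (n:ℝ)+1 by positivity)])
    have : Tendsto (fun n : ℕ => μ (E (t - 1/((n:ℝ)+1)))) atTop (nhds 1) := by
      simpa only [show ∀ n : ℕ, μ (E (t - 1/((n:ℝ)+1))) = 1 from hconst] using
        (tendsto_const_nhds : Filter.Tendsto (fun _ : ℕ => (1:ℝ)) atTop (nhds 1))
    exact tendsto_nhds_unique htd this
  obtain ⟨c, hcut⟩ := cutoff_exists f h2 hmonof h0 h1 hlcf
  have hchoq1 : choquet μ ξ = c := choquet_of_cutoff c f hcut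
  -- PART 2
  set g : ℝ → ℝ := fun t => conjCap μ (E t) with hg
  have hg2 : ∀ t, g t = 0 ∨ g t = 1 := by
    intro t
    rcases h01 (E t)ᶜ (meas0 t).compl with h | h
    · right; simp [hg, conjCap, h]
    · left; simp [hg, conjCap, h]
  have hmonog : ∀ ⦃s t : ℝ⦄, s ≤ t → g t ≤ g s := by
    intro s t hst
    have := hmonoμ _ _ (measM s).compl (measM t).compl (Set.compl_subset_compl.mpr (hEanti hst))
    simp only [hg, conjCap]
    linarith
  have hg0 : ∃ t, g t = 0 := by
    have hU : (⋃ n : ℕ, (E (n:ℝ))ᶜ) = Set.univ := by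
      ext ω
      simp only [Set.mem_iUnion, Set.mem_compl_iff, hE, Set.mem_setOf_eq, Set.mem_univ, iff_true,
        ge_iff_le, not_le]
      obtain ⟨n, hn⟩ := exists_nat_gt (ξ ω)
      exact ⟨n, hn⟩
    have htd : Tendsto (fun n : ℕ => μ (E (n:ℝ))ᶜ) atTop (nhds 1) := by
      have := hb (fun n : ℕ => (E (n:ℝ))ᶜ) (fun n => (measM _).compl)
        (fun n m hnm => Set.compl_subset_compl.mpr (hEanti (by exact_mod_cast hnm)))
      rwa [hU, huniv] at this
    have htd' : Tendsto (fun n : ℕ => g (n:ℝ)) atTop (nhds 0) := by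
      have : (fun n : ℕ => g (n:ℝ)) = fun n : ℕ => 1 - μ (E (n:ℝ))ᶜ := rfl
      rw [this]
      simpa using ((tendsto_const_nhds : Filter.Tendsto (fun _ : ℕ => (1:ℝ)) atTop (nhds 1))).sub htd
    obtain ⟨n, hn⟩ := (htd'.eventually_lt_const (show (0:ℝ) < 1 by norm_num)).exists
    rcases hg2 n with h | h
    · exact ⟨n, h⟩
    · rw [h] at hn; linarith
  have hg1 : ∃ t, g t = 1 := by
    have hI : (⋂ n : ℕ, (E (-(n:ℝ)))ᶜ) = ∅ := by
      ext ω
      simp only [Set.mem_iInter, Set.mem_compl_iff, hE, Set.mem_setOf_eq,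
        Set.mem_empty_iff_false, iff_false, ge_iff_le, not_le]
      push_neg
      obtain ⟨n, hn⟩ := exists_nat_gt (-(ξ ω))
      exact ⟨n, by linarith⟩
    have htd : Tendsto (fun n : ℕ => μ (E (-(n:ℝ)))ᶜ) atTop (nhds 0) := by
      have := ha (fun n : ℕ => (E (-(n:ℝ)))ᶜ) (fun n => (measM _).compl)
        (fun n m hnm => Set.compl_subset_compl.mpr
          (hEanti (neg_le_neg (by exact_mod_cast hnm))))
      rwa [hI, hemp] at this
    have htd' : Tendsto (fun n : ℕ => g (-(n:ℝ))) atTop (nhds 1) := by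
      have heq : (fun n : ℕ => g (-(n:ℝ))) = fun n : ℕ => 1 - μ (E (-(n:ℝ)))ᶜ := rfl
      rw [heq]
      simpa using ((tendsto_const_nhds : Filter.Tendsto (fun _ : ℕ => (1:ℝ)) atTop (nhds 1))).sub htd
    obtain ⟨n, hn⟩ := (htd'.eventually_const_lt (show (0:ℝ) < 1 by norm_num)).exists
    rcases hg2 (-(n:ℝ)) with h | h
    · rw [h] at hn; linarith
    · exact ⟨_, h⟩
  have hlcg : ∀ t, (∀ s, s < t → g s = 1) → g t = 1 := by
    intro t hyp
    have hUc : (⋃ n : ℕ, (E (t - 1/((n:ℝ)+1)))ᶜ) = (E t)ᶜ := by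
      rw [← Set.compl_iInter, hIE t]
    have hmonoA : Monotone (fun n : ℕ => (E (t - 1/((n:ℝ)+1)))ᶜ) := fun n m hnm =>
      Set.compl_subset_compl.mpr (hEanti (by linarith [hfrac hnm]))
    have htd := hb _ (fun n => (measM _).compl) hmonoA
    rw [hUc] at htd
    have hconst : ∀ n : ℕ, μ (E (t - 1/((n:ℝ)+1)))ᶜ = 0 := by
      intro n
      have := hyp (t - 1/((n:ℝ)+1))
        (by linarith [one_div_pos.mpr (show (0:ℝ) < (n:ℝ)+1 by positivity)])
      simp only [hg, conjCap] at this
      linarith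
    have hz : Tendsto (fun n : ℕ => μ (E (t - 1/((n:ℝ)+1)))ᶜ) atTop (nhds 0) := by
      simpa only [hconst] using (tendsto_const_nhds : Filter.Tendsto (fun _ : ℕ => (0:ℝ)) atTop (nhds 0))
    have : μ (E t)ᶜ = 0 := tendsto_nhds_unique htd hz
    simp [hg, conjCap, this]
  obtain ⟨d, hcutg⟩ := cutoff_exists g hg2 hmonog hg0 hg1 hlcg
  have hchoq2 : choquet (conjCap μ) ξ = d := choquet_of_cutoff d g hcutg
  constructor
  · rw [hchoq1]
    have := hcut c
    rw [if_pos le_rfl] at this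
    exact this
  · rw [hchoq2]
    have hIle : (⋂ n : ℕ, (E (d + 1/((n:ℝ)+1)))ᶜ) = {ω | ξ ω ≤ d} := by
      ext ω
      simp only [Set.mem_iInter, Set.mem_compl_iff, hE, Set.mem_setOf_eq, ge_iff_le, not_le]
      constructor
      · intro h
        by_contra hlt
        push_neg at hlt
        obtain ⟨n, hn⟩ := exists_nat_one_div_lt (show (0:ℝ) < ξ ω - d by linarith)
        have := h n
        linarith
      · intro h n
        linarith [one_div_pos.mpr (show (0:ℝ) < (n:ℝ)+1 by positivity)]
    have hantiA : Antitone (fun n : ℕ => (E (d + 1/((n:ℝ)+1)))ᶜ) := fun n m hnm =>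
      Set.compl_subset_compl.mpr (hEanti (by linarith [hfrac hnm]))
    have htd := ha _ (fun n => (measM _).compl) hantiA
    rw [hIle] at htd
    have hconst : ∀ n : ℕ, μ (E (d + 1/((n:ℝ)+1)))ᶜ = 1 := by
      intro n
      have hgd := hcutg (d + 1/((n:ℝ)+1))
      rw [if_neg (by push_neg; linarith [one_div_pos.mpr (show (0:ℝ) < (n:ℝ)+1 by positivity)])] at hgd
      simp only [hg, conjCap] at hgd
      linarith
    have hone : Tendsto (fun n : ℕ => μ (E (d + 1/((n:ℝ)+1)))ᶜ) atTop (nhds 1) := by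
      simpa only [hconst] using (tendsto_const_nhds : Filter.Tendsto (fun _ : ℕ => (1:ℝ)) atTop (nhds 1))
    exact tendsto_nhds_unique htd hone
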